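/- Let x : [0,T) → ℝ^{k+1} solve x_i'(t) = m ∑_{j≠i} 1/(x_j(t) - x_i(t)) for i = 1,...,k+1, with the x_i(t) pairwise distinct. Let y_r(t) = σ_r(x_1(t),...,x_{k+1}(t)) denote the r-th elementary symmetric polynomial evaluated along the flow. Then y_r'(t) = (m/2)(k-r+3)(k-r+2) y_{r-2}(t) for 2 ≤ r ≤ k+1. In particular y_2'(t) = m·k(k+1)/2, and each y_r(t) is a polynomial in t. -/

import Mathlib

open Finset

/-- Reindexing pairs (S, i∈S) with |S|=r as (A, i∉A) with |A|=r-1. -/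
lemma reindexA {k : ℕ} (r : ℕ) (hr : 1 ≤ r) (F : Finset (Fin (k+1)) → Fin (k+1) → ℝ) :
    ∑ S ∈ Finset.univ.powersetCard r, ∑ i ∈ S, F (S.erase i) i
      = ∑ A ∈ Finset.univ.powersetCard (r-1), ∑ i ∈ Finset.univ \ A, F A i := by
  rw [Finset.sum_sigma', Finset.sum_sigma']
  refine Finset.sum_nbij' (fun p => ⟨p.1.erase p.2, p.2⟩) (fun p => ⟨insert p.2 p.1, p.2⟩)
    ?_ ?_ ?_ ?_ ?_
  · rintro ⟨S, i⟩ hp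
    simp only [Finset.mem_sigma, Finset.mem_powersetCard_univ] at hp ⊢
    simp only [Finset.mem_sdiff, Finset.mem_univ, true_and, Finset.mem_erase]
    refine ⟨by rw [Finset.card_erase_of_mem hp.2, hp.1], by simp⟩
  · rintro ⟨A, i⟩ hp
    simp only [Finset.mem_sigma, Finset.mem_powersetCard_univ, Finset.mem_sdiff,
      Finset.mem_univ, true_and] at hp ⊢
    refine ⟨by rw [Finset.card_insert_of_notMem hp.2, hp.1]; omega, Finset.mem_insert_self _ _⟩
  · rintro ⟨S, i⟩ hp
    simp only [Finset.mem_sigma, Finset.mem_powersetCard_univ] at hp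
    simp [Finset.insert_erase hp.2]
  · rintro ⟨A, i⟩ hp
    simp only [Finset.mem_sigma, Finset.mem_powersetCard_univ, Finset.mem_sdiff,
      Finset.mem_univ, true_and] at hp
    simp [Finset.erase_insert hp.2]
  · rintro ⟨S, i⟩ _; rfl

/-- Antisymmetric sums vanish. -/
lemma antisymA {α : Type*} [DecidableEq α] (C : Finset α) (v : α → ℝ) :
    ∑ i ∈ C, ∑ j ∈ C.erase i, 1 / (v j - v i) = 0 := by
  have h : ∑ i ∈ C, ∑ j ∈ C.erase i, 1 / (v j - v i)
      = ∑ j ∈ C, ∑ i ∈ C.erase j, 1 / (v j - v i) :=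
    Finset.sum_comm' (by intro a b; simp [Finset.mem_erase]; tauto)
  have h2 : ∑ j ∈ C, ∑ i ∈ C.erase j, 1 / (v j - v i)
      = -∑ j ∈ C, ∑ i ∈ C.erase j, 1 / (v i - v j) := by
    rw [← Finset.sum_neg_distrib]
    refine Finset.sum_congr rfl fun j _ => ?_
    rw [← Finset.sum_neg_distrib]
    refine Finset.sum_congr rfl fun i _ => ?_
    rw [show v j - v i = -(v i - v j) by ring, div_neg]
  have := h.trans h2
  linarith [this]

/-- Pairing sums. -/
lemma pairingA {α : Type*} [DecidableEq α] (C : Finset α) (v : α → ℝ)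
    (hv : ∀ i ∈ C, ∀ j ∈ C, i ≠ j → v i ≠ v j) :
    ∑ j ∈ C, ∑ i ∈ C.erase j, v j / (v j - v i)
      = (C.card : ℝ) * ((C.card : ℝ) - 1) / 2 := by
  rcases C.eq_empty_or_nonempty with rfl | hC
  · simp
  set S := ∑ j ∈ C, ∑ i ∈ C.erase j, v j / (v j - v i) with hS
  set S2 := ∑ j ∈ C, ∑ i ∈ C.erase j, v i / (v i - v j) with hS2
  have hswap : S2 = S := by
    rw [hS, hS2]
    exact Finset.sum_comm' (by intro a b; simp [Finset.mem_erase]; tauto)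
  have hsum : S + S2 = (C.card : ℝ) * ((C.card : ℝ) - 1) := by
    rw [hS, hS2, ← Finset.sum_add_distrib]
    have key : ∀ j ∈ C, ((∑ i ∈ C.erase j, v j / (v j - v i))
        + ∑ i ∈ C.erase j, v i / (v i - v j)) = (C.card : ℝ) - 1 := by
      intro j hj
      rw [← Finset.sum_add_distrib]
      have hone : ∀ i ∈ C.erase j, v j / (v j - v i) + v i / (v i - v j) = 1 := by
        intro i hi
        rw [Finset.mem_erase] at hi
        have hne : v j - v i ≠ 0 := sub_ne_zero.2 (hv j hj i hi.2 (Ne.symm hi.1))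
        have hne2 : v i - v j ≠ 0 := sub_ne_zero.2 (hv i hi.2 j hj hi.1)
        field_simp
        ring
      rw [Finset.sum_congr rfl hone, Finset.sum_const, Finset.card_erase_of_mem hj]
      have h1 : 1 ≤ C.card := Finset.card_pos.2 ⟨j, hj⟩
      rw [nsmul_eq_mul, mul_one, Nat.cast_sub h1, Nat.cast_one]
    rw [Finset.sum_congr rfl key, Finset.sum_const, nsmul_eq_mul]
  linarith

/-- The `r`-th elementary symmetric polynomial of `v : Fin (k+1) → ℝ`. -/
def esymmA {k : ℕ} (r : ℕ) (v : Fin (k + 1) → ℝ) : ℝ :=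
  ∑ s ∈ Finset.univ.powersetCard r, ∏ i ∈ s, v i

lemma esymmA_zero {k : ℕ} (v : Fin (k+1) → ℝ) : esymmA 0 v = 1 := by
  simp [esymmA, Finset.powersetCard_zero]

/-- The key combinatorial identity. -/
lemma keyA {k : ℕ} (r : ℕ) (hr2 : 2 ≤ r) (hr : r ≤ k + 1) (v : Fin (k+1) → ℝ)
    (hv : ∀ i j, i ≠ j → v i ≠ v j) :
    ∑ S ∈ Finset.univ.powersetCard r, ∑ i ∈ S,
        (∏ j ∈ S.erase i, v j) * (∑ j ∈ Finset.univ \ {i}, 1 / (v j - v i))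
      = ((k:ℝ) - r + 3) * ((k:ℝ) - r + 2) / 2 * esymmA (r-2) v := by
  have h1 : ∑ S ∈ Finset.univ.powersetCard r, ∑ i ∈ S,
        (∏ j ∈ S.erase i, v j) * (∑ j ∈ Finset.univ \ {i}, 1 / (v j - v i))
      = ∑ A ∈ Finset.univ.powersetCard (r-1), ∑ i ∈ Finset.univ \ A,
        (∏ j ∈ A, v j) * (∑ j ∈ Finset.univ \ {i}, 1 / (v j - v i)) :=
    reindexA r (by omega) (fun A i => (∏ j ∈ A, v j) * (∑ j ∈ Finset.univ \ {i}, 1 / (v j - v i)))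
  rw [h1]
  have h2 : ∀ A ∈ Finset.univ.powersetCard (r-1),
      ∑ i ∈ Finset.univ \ A, (∏ j ∈ A, v j) * (∑ j ∈ Finset.univ \ {i}, 1 / (v j - v i))
      = ∑ j ∈ A, (∏ j' ∈ A, v j') * (∑ i ∈ Finset.univ \ A, 1 / (v j - v i)) := by
    intro A hA
    have hsplit : ∀ i ∈ Finset.univ \ A,
        (∑ j ∈ Finset.univ \ {i}, 1 / (v j - v i))
        = (∑ j ∈ A, 1 / (v j - v i)) + ∑ j ∈ (Finset.univ \ A).erase i, 1 / (v j - v i) := by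
      intro i hi
      rw [Finset.mem_sdiff] at hi
      rw [← Finset.sum_union]
      · congr 1
        ext j
        simp only [Finset.mem_sdiff, Finset.mem_singleton, Finset.mem_union, Finset.mem_erase,
          Finset.mem_univ, true_and]
        constructor
        · intro hj
          by_cases hjA : j ∈ A
          · exact Or.inl hjA
          · exact Or.inr ⟨hj, hjA⟩
        · rintro (hj | ⟨hj, _⟩)
          · intro he; exact hi.2 (he ▸ hj)
          · exact hj
      · rw [Finset.disjoint_left]
        intro a ha hb
        rw [Finset.mem_erase, Finset.mem_sdiff] at hb
        exact hb.2.2 ha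
    rw [Finset.sum_congr rfl (fun i hi => by rw [hsplit i hi, mul_add])]
    rw [Finset.sum_add_distrib]
    have hz : ∑ i ∈ Finset.univ \ A,
        (∏ j ∈ A, v j) * ∑ j ∈ (Finset.univ \ A).erase i, 1 / (v j - v i) = 0 := by
      rw [← Finset.mul_sum, antisymA (Finset.univ \ A) v, mul_zero]
    rw [hz, add_zero]
    rw [← Finset.mul_sum, Finset.sum_comm, Finset.mul_sum]
  rw [Finset.sum_congr rfl h2]
  have h3 : ∑ A ∈ Finset.univ.powersetCard (r-1), ∑ j ∈ A,
        (∏ j' ∈ A, v j') * (∑ i ∈ Finset.univ \ A, 1 / (v j - v i))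
      = ∑ A ∈ Finset.univ.powersetCard (r-1), ∑ j ∈ A,
        (v j * ∏ j' ∈ A.erase j, v j') *
          (∑ i ∈ Finset.univ \ insert j (A.erase j), 1 / (v j - v i)) := by
    refine Finset.sum_congr rfl fun A _ => Finset.sum_congr rfl fun j hj => ?_
    rw [Finset.mul_prod_erase A v hj, Finset.insert_erase hj]
  rw [h3]
  have h4 : ∑ A ∈ Finset.univ.powersetCard (r-1), ∑ j ∈ A,
        (v j * ∏ j' ∈ A.erase j, v j') *
          (∑ i ∈ Finset.univ \ insert j (A.erase j), 1 / (v j - v i))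
      = ∑ B ∈ Finset.univ.powersetCard (r-1-1), ∑ j ∈ Finset.univ \ B,
        (v j * ∏ j' ∈ B, v j') * (∑ i ∈ Finset.univ \ insert j B, 1 / (v j - v i)) :=
    reindexA (r-1) (by omega)
      (fun B j => (v j * ∏ j' ∈ B, v j') * (∑ i ∈ Finset.univ \ insert j B, 1 / (v j - v i)))
  rw [h4]
  have hrr : r - 1 - 1 = r - 2 := by omega
  rw [hrr]
  have h5 : ∀ B ∈ Finset.univ.powersetCard (r-2),
      ∑ j ∈ Finset.univ \ B,
        (v j * ∏ j' ∈ B, v j') * (∑ i ∈ Finset.univ \ insert j B, 1 / (v j - v i))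
      = (∏ j' ∈ B, v j') * (((k:ℝ) - r + 3) * ((k:ℝ) - r + 2) / 2) := by
    intro B hB
    rw [Finset.mem_powersetCard_univ] at hB
    have hset : ∀ j ∈ Finset.univ \ B,
        Finset.univ \ insert j B = (Finset.univ \ B).erase j := by
      intro j _
      ext a
      simp only [Finset.mem_sdiff, Finset.mem_insert, Finset.mem_erase, Finset.mem_univ, true_and]
      tauto
    have step : ∀ j ∈ Finset.univ \ B,
        (v j * ∏ j' ∈ B, v j') * (∑ i ∈ Finset.univ \ insert j B, 1 / (v j - v i))
        = (∏ j' ∈ B, v j') * ∑ i ∈ (Finset.univ \ B).erase j, v j / (v j - v i) := by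
      intro j hj
      rw [hset j hj, Finset.mul_sum, Finset.mul_sum]
      refine Finset.sum_congr rfl fun i _ => ?_
      field_simp
    rw [Finset.sum_congr rfl step, ← Finset.mul_sum]
    congr 1
    rw [pairingA (Finset.univ \ B) v (fun i _ j _ hij => hv i j hij)]
    have hcard : (Finset.univ \ B).card = k + 1 - (r - 2) := by
      rw [Finset.card_univ_diff, hB, Fintype.card_fin]
    rw [hcard]
    have hc : ((k + 1 - (r - 2) : ℕ) : ℝ) = (k:ℝ) - (r:ℝ) + 3 := by
      rw [Nat.cast_sub (by omega), Nat.cast_sub hr2]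
      push_cast
      ring
    rw [hc]
    ring
  rw [Finset.sum_congr rfl h5, ← Finset.sum_mul, esymmA]
  ring

/-- Polynomial antiderivative. -/
noncomputable def pIntA (p : Polynomial ℝ) : Polynomial ℝ :=
  p.sum fun n a => Polynomial.C (a / ((n : ℝ) + 1)) * Polynomial.X ^ (n + 1)

lemma derivative_pIntA (p : Polynomial ℝ) : (pIntA p).derivative = p := by
  rw [pIntA, Polynomial.sum_def, map_sum]
  have h : ∀ n ∈ p.support,
      Polynomial.derivative (Polynomial.C (p.coeff n / ((n : ℝ) + 1)) * Polynomial.X ^ (n + 1))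
      = Polynomial.C (p.coeff n) * Polynomial.X ^ n := by
    intro n _
    have hne : ((n : ℝ) + 1) ≠ 0 := by positivity
    rw [Polynomial.derivative_C_mul, Polynomial.derivative_X_pow, Nat.add_sub_cancel,
      ← mul_assoc, ← Polynomial.C_mul]
    congr 1
    rw [Polynomial.C_inj]
    push_cast
    exact div_mul_cancel₀ _ hne
  rw [Finset.sum_congr rfl h]
  exact p.sum_C_mul_X_pow_eq

/-- If `f'` agrees with a polynomial on `[0,T)` then `f` is a polynomial there. -/
lemma poly_of_derivA {T : ℝ} (f g : ℝ → ℝ) (p : Polynomial ℝ)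
    (hg : ∀ t ∈ Set.Ico (0:ℝ) T, g t = p.eval t)
    (hf : ∀ t ∈ Set.Ico (0:ℝ) T, HasDerivAt f (g t) t) :
    ∃ q : Polynomial ℝ, ∀ t ∈ Set.Ico (0:ℝ) T, f t = q.eval t := by
  refine ⟨pIntA p + Polynomial.C (f 0 - (pIntA p).eval 0), fun t ht => ?_⟩
  obtain ⟨ht0, htT⟩ := ht
  set q : Polynomial ℝ := pIntA p + Polynomial.C (f 0 - (pIntA p).eval 0) with hq
  have hqd : q.derivative = p := by
    rw [hq, Polynomial.derivative_add, Polynomial.derivative_C, add_zero, derivative_pIntA]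
  have hsub : ∀ s ∈ Set.Icc (0:ℝ) t, s ∈ Set.Ico (0:ℝ) T := by
    intro s hs
    exact ⟨hs.1, lt_of_le_of_lt hs.2 htT⟩
  have := eq_of_has_deriv_right_eq (a := 0) (b := t)
    (f' := fun s => p.eval s) (f := f) (g := fun s => q.eval s)
    (fun s hs => by
      have hsm := hsub s ⟨hs.1, le_of_lt hs.2⟩
      have := hf s hsm
      rw [hg s hsm] at this
      exact this.hasDerivWithinAt)
    (fun s _ => by
      have : HasDerivAt (fun y => q.eval y) (q.derivative.eval s) s := q.hasDerivAt s
      rw [hqd] at this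
      exact this.hasDerivWithinAt)
    (fun s hs => ((hf s (hsub s hs)).continuousAt).continuousWithinAt)
    (q.continuous_aeval.continuousOn)
    (by rw [hq]; simp)
  exact this t ⟨ht0, le_refl t⟩

/-- Derivative of `esymmA r` along the flow, raw form. -/
lemma hasDerivAt_esymmA {k : ℕ} {T m : ℝ} {x : ℝ → Fin (k + 1) → ℝ} {t : ℝ}
    (ht : t ∈ Set.Ico (0:ℝ) T)
    (hode : ∀ t ∈ Set.Ico (0 : ℝ) T, ∀ i,
      HasDerivAt (fun s => x s i)
        (m * ∑ j ∈ Finset.univ \ {i}, 1 / (x t j - x t i)) t) (r : ℕ) :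
    HasDerivAt (fun s => esymmA r (x s))
      (∑ S ∈ Finset.univ.powersetCard r, ∑ i ∈ S,
        (∏ j ∈ S.erase i, x t j) * (m * ∑ j ∈ Finset.univ \ {i}, 1 / (x t j - x t i))) t := by
  have h : ∀ S ∈ Finset.univ.powersetCard r,
      HasDerivAt (fun s => ∏ i ∈ S, x s i)
        (∑ i ∈ S, (∏ j ∈ S.erase i, x t j) *
          (m * ∑ j ∈ Finset.univ \ {i}, 1 / (x t j - x t i))) t := by
    intro S _
    have := HasDerivAt.fun_finsetProd (u := S) (f := fun i s => x s i)
      (f' := fun i => m * ∑ j ∈ Finset.univ \ {i}, 1 / (x t j - x t i)) (x := t)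
      (fun i _ => hode t ht i)
    simpa [smul_eq_mul] using this
  have := HasDerivAt.fun_sum h
  simpa [esymmA] using this

/-- If `x` solves the `A_k` MCF ODE `xᵢ' = m ∑_{j≠i} 1/(xⱼ - xᵢ)` with pairwise distinct
coordinates, and `y_r(t) = σ_r(x(t))`, then `y_r' = (m/2)(k-r+3)(k-r+2) y_{r-2}` for
`2 ≤ r ≤ k+1`; in particular `y₂' = m·k(k+1)/2` and each `y_r` is a polynomial in `t`. -/
theorem stmt_8 {k : ℕ} (T : ℝ) (hT : 0 < T) (m : ℝ) (hm : 0 < m)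
    (x : ℝ → Fin (k + 1) → ℝ)
    (hdist : ∀ t ∈ Set.Ico (0 : ℝ) T, ∀ i j, i ≠ j → x t i ≠ x t j)
    (hode : ∀ t ∈ Set.Ico (0 : ℝ) T, ∀ i,
      HasDerivAt (fun s => x s i)
        (m * ∑ j ∈ Finset.univ \ {i}, 1 / (x t j - x t i)) t) :
    (∀ r, 2 ≤ r → r ≤ k + 1 → ∀ t ∈ Set.Ico (0 : ℝ) T,
        HasDerivAt (fun s => esymmA r (x s))
          (m / 2 * ((k : ℝ) - r + 3) * ((k : ℝ) - r + 2) * esymmA (r - 2) (x t)) t) ∧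
      (∀ t ∈ Set.Ico (0 : ℝ) T,
        HasDerivAt (fun s => esymmA 2 (x s)) (m * k * (k + 1) / 2) t) ∧
      (∀ r ≤ k + 1, ∃ p : Polynomial ℝ, ∀ t ∈ Set.Ico (0 : ℝ) T,
        esymmA r (x t) = p.eval t) := by
  have main : ∀ r, 2 ≤ r → r ≤ k + 1 → ∀ t ∈ Set.Ico (0 : ℝ) T,
      HasDerivAt (fun s => esymmA r (x s))
        (m / 2 * ((k : ℝ) - r + 3) * ((k : ℝ) - r + 2) * esymmA (r - 2) (x t)) t := by
    intro r h2 hk t ht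
    have hD := hasDerivAt_esymmA ht hode r
    have heq : ∑ S ∈ Finset.univ.powersetCard r, ∑ i ∈ S,
        (∏ j ∈ S.erase i, x t j) * (m * ∑ j ∈ Finset.univ \ {i}, 1 / (x t j - x t i))
        = m / 2 * ((k : ℝ) - r + 3) * ((k : ℝ) - r + 2) * esymmA (r - 2) (x t) := by
      have hm' : ∑ S ∈ Finset.univ.powersetCard r, ∑ i ∈ S,
          (∏ j ∈ S.erase i, x t j) * (m * ∑ j ∈ Finset.univ \ {i}, 1 / (x t j - x t i))
          = m * ∑ S ∈ Finset.univ.powersetCard r, ∑ i ∈ S,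
            (∏ j ∈ S.erase i, x t j) * (∑ j ∈ Finset.univ \ {i}, 1 / (x t j - x t i)) := by
        rw [Finset.mul_sum]
        refine Finset.sum_congr rfl fun S _ => ?_
        rw [Finset.mul_sum]
        exact Finset.sum_congr rfl fun i _ => by ring
      rw [hm', keyA r h2 hk (x t) (hdist t ht)]
      ring
    rw [heq] at hD
    exact hD
  refine ⟨main, ?_, ?_⟩
  · intro t ht
    rcases Nat.eq_zero_or_pos k with rfl | hk0
    · have h0 : (fun s => esymmA 2 (x s)) = fun _ => (0:ℝ) := by
        funext s
        rw [esymmA, Finset.powersetCard_eq_empty.2 (by simp), Finset.sum_empty]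
      rw [h0]
      simp only [Nat.cast_zero, mul_zero, zero_mul, zero_div]
      exact hasDerivAt_const t (0:ℝ)
    · convert main 2 le_rfl (by omega) t ht using 1
      rw [show (2 : ℕ) - 2 = 0 from rfl, esymmA_zero]
      push_cast
      ring
  · intro r
    induction r using Nat.strong_induction_on with
    | _ r ih =>
      intro hrk
      rcases Nat.lt_or_ge r 2 with hlt | hge
      · interval_cases r
        · exact ⟨1, fun t ht => by simp [esymmA_zero]⟩
        · refine poly_of_derivA (fun s => esymmA 1 (x s)) (fun _ => (0:ℝ)) 0 (by simp) ?_
          intro t ht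
          have hD := hasDerivAt_esymmA ht hode 1
          have hz : ∑ S ∈ Finset.univ.powersetCard 1, ∑ i ∈ S,
              (∏ j ∈ S.erase i, x t j) *
                (m * ∑ j ∈ Finset.univ \ {i}, 1 / (x t j - x t i)) = 0 := by
            have h1 : ∑ S ∈ Finset.univ.powersetCard 1, ∑ i ∈ S,
                (∏ j ∈ S.erase i, x t j) *
                  (m * ∑ j ∈ Finset.univ \ {i}, 1 / (x t j - x t i))
                = ∑ A ∈ Finset.univ.powersetCard (1-1), ∑ i ∈ Finset.univ \ A,
                  (∏ j ∈ A, x t j) *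
                    (m * ∑ j ∈ Finset.univ \ {i}, 1 / (x t j - x t i)) :=
              reindexA 1 le_rfl (fun A i => (∏ j ∈ A, x t j) *
                (m * ∑ j ∈ Finset.univ \ {i}, 1 / (x t j - x t i)))
            rw [h1]
            rw [show (1:ℕ) - 1 = 0 from rfl, Finset.powersetCard_zero, Finset.sum_singleton]
            simp only [Finset.prod_empty, one_mul, Finset.sdiff_empty]
            rw [← Finset.mul_sum]
            have hz2 : ∑ i ∈ (Finset.univ : Finset (Fin (k+1))),
                ∑ j ∈ Finset.univ \ {i}, 1 / (x t j - x t i) = 0 := by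
              have := antisymA (Finset.univ : Finset (Fin (k+1))) (x t)
              refine Eq.trans ?_ this
              exact Finset.sum_congr rfl fun i _ => by
                rw [Finset.sdiff_singleton_eq_erase]
            rw [hz2, mul_zero]
          rw [hz] at hD
          exact hD
      · obtain ⟨p, hp⟩ := ih (r - 2) (by omega) (by omega)
        refine poly_of_derivA (fun s => esymmA r (x s))
          (fun t => m / 2 * ((k : ℝ) - r + 3) * ((k : ℝ) - r + 2) * esymmA (r - 2) (x t))
          (Polynomial.C (m / 2 * ((k : ℝ) - r + 3) * ((k : ℝ) - r + 2)) * p) ?_ ?_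
        · intro t ht
          simp only [Polynomial.eval_mul, Polynomial.eval_C, hp t ht]
        · intro t ht
          exact main r hge hrk t ht
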